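/- Let n, m ≥ 1, let f, g : Fin m → (Fin n → Fin 2) with f λ ≠ g λ for every λ, and let c : Fin m → ℂ. Define the quantum orders p : Fin m → Fin n → ℤ by p λ ℓ := ((-1)^((f λ ℓ : ℕ)) - (-1)^((g λ ℓ : ℕ))) / 2 (each value lies in {-1, 0, 1}), and set E_Σ := Σ_λ, c λ • Matrix.stdBasisMatrix (f λ) (g λ) 1. Suppose there exist rotation angles φ : Fin n → ℝ such that for every λ there is an integer q λ with Σ_ℓ (p λ ℓ : ℝ) * φ ℓ = π + 2 * π * (q λ : ℝ). Then the individual local z-rotation K φ — the diagonal matrix with (K φ) h h := Complex.exp (-(Complex.I / 2) * Σ_ℓ (φ ℓ : ℂ) * (-1)^((h ℓ : ℕ))) — satisfies (K φ) * E_Σ * (K φ)ᴴ = -E_Σ. -/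

import Mathlib

open Matrix

/-- The individual local z-rotation with angles `φ ℓ` on each qubit `ℓ`:
the diagonal matrix with entry `exp(-(i/2) ∑ ℓ, φ ℓ * (-1)^(h ℓ))` at
configuration `h`. -/
noncomputable def zRot {n : ℕ} (φ : Fin n → ℝ) :
    Matrix (Fin n → Fin 2) (Fin n → Fin 2) ℂ :=
  Matrix.diagonal fun h =>
    Complex.exp (-(Complex.I / 2) * ∑ ℓ : Fin n, (φ ℓ : ℂ) * (-1 : ℂ) ^ ((h ℓ : ℕ)))

lemma cast_half (a b : Fin 2) :
    (((((-1 : ℤ) ^ ((a : ℕ)) - (-1 : ℤ) ^ ((b : ℕ))) / 2 : ℤ) : ℝ)) =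
      ((-1 : ℝ) ^ ((a : ℕ)) - (-1 : ℝ) ^ ((b : ℕ))) / 2 := by
  fin_cases a <;> fin_cases b <;> norm_num

lemma key {n : ℕ} (φ : Fin n → ℝ) (f g : Fin n → Fin 2)
    (h : ∃ q : ℤ, ∑ ℓ : Fin n,
        ((((-1 : ℤ) ^ ((f ℓ : ℕ)) - (-1 : ℤ) ^ ((g ℓ : ℕ))) / 2 : ℤ) : ℝ) * φ ℓ =
      Real.pi + 2 * Real.pi * (q : ℝ)) :
    zRot φ * Matrix.single f g (1 : ℂ) * (zRot φ)ᴴ =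
      -(Matrix.single f g (1 : ℂ)) := by
  obtain ⟨q, hq⟩ := h
  set d : (Fin n → Fin 2) → ℂ := fun h =>
    Complex.exp (-(Complex.I / 2) * ∑ ℓ : Fin n, (φ ℓ : ℂ) * (-1 : ℂ) ^ ((h ℓ : ℕ))) with hd
  have hstar : ∀ h, star (d h) =
      Complex.exp ((Complex.I / 2) * ∑ ℓ : Fin n, (φ ℓ : ℂ) * (-1 : ℂ) ^ ((h ℓ : ℕ))) := by
    intro h
    simp only [hd]
    rw [show ∀ z : ℂ, star z = (starRingEnd ℂ) z from fun _ => rfl, ← Complex.exp_conj]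
    congr 1
    simp only [_root_.map_mul, map_sum, map_pow, map_neg, map_div₀, _root_.map_one,
      Complex.conj_I, Complex.conj_ofReal, map_ofNat]
    ring
  have hmain : d f * star (d g) = -1 := by
    rw [hstar, hd]
    rw [← Complex.exp_add]
    have hsum : ∑ ℓ : Fin n, (φ ℓ : ℂ) * (-1 : ℂ) ^ ((f ℓ : ℕ)) -
        ∑ ℓ : Fin n, (φ ℓ : ℂ) * (-1 : ℂ) ^ ((g ℓ : ℕ)) =
        ((2 * (Real.pi + 2 * Real.pi * (q : ℝ)) : ℝ) : ℂ) := by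
      rw [← Finset.sum_sub_distrib]
      have : ∀ ℓ : Fin n, (φ ℓ : ℂ) * (-1 : ℂ) ^ ((f ℓ : ℕ)) -
          (φ ℓ : ℂ) * (-1 : ℂ) ^ ((g ℓ : ℕ)) =
          ((φ ℓ * ((-1 : ℝ) ^ ((f ℓ : ℕ)) - (-1 : ℝ) ^ ((g ℓ : ℕ))) : ℝ) : ℂ) := by
        intro ℓ; push_cast; ring
      rw [Finset.sum_congr rfl fun ℓ _ => this ℓ, ← Complex.ofReal_sum]
      congr 1
      have : ∑ ℓ : Fin n, φ ℓ * ((-1 : ℝ) ^ ((f ℓ : ℕ)) - (-1 : ℝ) ^ ((g ℓ : ℕ))) =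
          2 * ∑ ℓ : Fin n,
            ((((-1 : ℤ) ^ ((f ℓ : ℕ)) - (-1 : ℤ) ^ ((g ℓ : ℕ))) / 2 : ℤ) : ℝ) * φ ℓ := by
        rw [Finset.mul_sum]
        refine Finset.sum_congr rfl fun ℓ _ => ?_
        rw [cast_half]; ring
      rw [this, hq]
    have hexp : -(Complex.I / 2) * ∑ ℓ : Fin n, (φ ℓ : ℂ) * (-1 : ℂ) ^ ((f ℓ : ℕ)) +
        (Complex.I / 2) * ∑ ℓ : Fin n, (φ ℓ : ℂ) * (-1 : ℂ) ^ ((g ℓ : ℕ)) =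
        -(Real.pi * Complex.I) + (-q : ℤ) * (2 * Real.pi * Complex.I) := by
      have h2 : -(Complex.I / 2) * (∑ ℓ : Fin n, (φ ℓ : ℂ) * (-1 : ℂ) ^ ((f ℓ : ℕ)) -
          ∑ ℓ : Fin n, (φ ℓ : ℂ) * (-1 : ℂ) ^ ((g ℓ : ℕ))) =
          -(Real.pi * Complex.I) + (-q : ℤ) * (2 * Real.pi * Complex.I) := by
        rw [hsum]; push_cast; ring
      linear_combination h2
    rw [hexp, Complex.exp_add, Complex.exp_int_mul_two_pi_mul_I, Complex.exp_neg,
      Complex.exp_pi_mul_I]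
    norm_num
  ext a b
  simp only [zRot, diagonal_conjTranspose, Matrix.mul_diagonal, Matrix.diagonal_mul,
    Matrix.neg_apply, ← hd]
  by_cases hab : f = a ∧ g = b
  · obtain ⟨ha, hb⟩ := hab
    subst ha hb
    have h1 : Matrix.single f g (1 : ℂ) f g = 1 := by
      simp [Matrix.single]
    rw [h1, mul_one]
    simp only [Pi.star_apply]
    linear_combination hmain
  · simp only [Matrix.single, Matrix.of_apply, if_neg hab]
    simp

theorem stmt15 (n m : ℕ) (hn : 1 ≤ n) (hm : 1 ≤ m)
    (f g : Fin m → (Fin n → Fin 2)) (hfg : ∀ μ, f μ ≠ g μ) (c : Fin m → ℂ)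
    (φ : Fin n → ℝ)
    (hφ : ∀ μ : Fin m, ∃ q : ℤ,
      ∑ ℓ : Fin n,
          ((((-1 : ℤ) ^ ((f μ ℓ : ℕ)) - (-1 : ℤ) ^ ((g μ ℓ : ℕ))) / 2 : ℤ) : ℝ) * φ ℓ =
        Real.pi + 2 * Real.pi * (q : ℝ)) :
    zRot φ * (∑ μ : Fin m, c μ • Matrix.single (f μ) (g μ) (1 : ℂ)) * (zRot φ)ᴴ =
      -(∑ μ : Fin m, c μ • Matrix.single (f μ) (g μ) (1 : ℂ)) := by
  rw [Finset.mul_sum, Finset.sum_mul, ← Finset.sum_neg_distrib]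
  refine Finset.sum_congr rfl fun μ _ => ?_
  rw [Matrix.mul_smul, Matrix.smul_mul, key φ (f μ) (g μ) (hφ μ), smul_neg]
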